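/- Let d be a smooth function on an open set of ℝⁿ with |∇d| = 1. Then the second normal derivative of the Laplacian satisfies (∇d · ∇)(∇d · ∇(Δd)) = 2 Tr[(∇²d)³]. -/

import Mathlib

open scoped BigOperators

/-- Partial derivative in direction `i`. -/
noncomputable def pd {n : ℕ} (i : Fin n) (f : (Fin n → ℝ) → ℝ) : (Fin n → ℝ) → ℝ :=
  fun x => fderiv ℝ f x (Pi.single i 1)

/-- Laplacian. -/
noncomputable def lap {n : ℕ} (f : (Fin n → ℝ) → ℝ) : (Fin n → ℝ) → ℝ :=
  fun x => ∑ i, pd i (pd i f) x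

/-- Hessian matrix. -/
noncomputable def hess {n : ℕ} (f : (Fin n → ℝ) → ℝ) (x : Fin n → ℝ) :
    Matrix (Fin n) (Fin n) ℝ :=
  Matrix.of fun i j => pd i (pd j f) x

/-- Normal derivative operator `∇d · ∇`. -/
noncomputable def normalDeriv {n : ℕ} (d f : (Fin n → ℝ) → ℝ) : (Fin n → ℝ) → ℝ :=
  fun x => ∑ i, pd i d x * pd i f x

section Helpers
set_option linter.unusedSectionVars false
variable {n : ℕ} {U : Set (Fin n → ℝ)} (hU : IsOpen U)
include hU

lemma pd_contDiffOn {m : ℕ} {f : (Fin n → ℝ) → ℝ} (hf : ContDiffOn ℝ (m+1) f U)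
    (i : Fin n) : ContDiffOn ℝ m (pd i f) U := by
  have h := hf.fderiv_of_isOpen hU (le_refl ((m:WithTop ℕ∞)+1))
  exact h.clm_apply contDiffOn_const

lemma pd_diffAt {m : ℕ} {f : (Fin n → ℝ) → ℝ} (hf : ContDiffOn ℝ (m+1) f U)
    {x} (hx : x ∈ U) : DifferentiableAt ℝ f x := by
  exact (hf.contDiffAt (hU.mem_nhds hx)).differentiableAt
    (by simp)

lemma pd_congr {f g : (Fin n → ℝ) → ℝ} (h : ∀ y ∈ U, f y = g y) {x} (hx : x ∈ U)
    (i : Fin n) : pd i f x = pd i g x := by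
  have : f =ᶠ[nhds x] g := Filter.eventually_of_mem (hU.mem_nhds hx) h
  unfold pd; rw [this.fderiv_eq]

omit hU in
lemma pd_const (c : ℝ) (i : Fin n) (x : Fin n → ℝ) : pd i (fun _ => c) x = 0 := by
  unfold pd; rw [fderiv_fun_const]; rfl

omit hU in
lemma pd_mul {f g : (Fin n → ℝ) → ℝ} {x} (hf : DifferentiableAt ℝ f x)
    (hg : DifferentiableAt ℝ g x) (i : Fin n) :
    pd i (fun y => f y * g y) x = pd i f x * g x + f x * pd i g x := by
  unfold pd; rw [fderiv_fun_mul hf hg]; simp; ring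

omit hU in
lemma pd_sum {ι : Type*} (s : Finset ι) {f : ι → (Fin n → ℝ) → ℝ} {x}
    (h : ∀ j ∈ s, DifferentiableAt ℝ (f j) x) (i : Fin n) :
    pd i (fun y => ∑ j ∈ s, f j y) x = ∑ j ∈ s, pd i (f j) x := by
  unfold pd; rw [fderiv_fun_sum h]; simp

omit hU in
lemma pd_neg (f : (Fin n → ℝ) → ℝ) (x) (i : Fin n) :
    pd i (fun y => -f y) x = -pd i f x := by
  unfold pd; rw [fderiv_fun_neg]; simp

lemma pd_symm {f : (Fin n → ℝ) → ℝ} (hf : ContDiffOn ℝ 2 f U) {x} (hx : x ∈ U)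
    (i j : Fin n) : pd i (pd j f) x = pd j (pd i f) x := by
  have h2 : IsSymmSndFDerivAt ℝ f x :=
    (hf.contDiffAt (hU.mem_nhds hx)).isSymmSndFDerivAt (by simp)
  have hdf : DifferentiableAt ℝ (fderiv ℝ f) x := by
    have := hf.fderiv_of_isOpen hU (m := 1) (by norm_num)
    exact (this.contDiffAt (hU.mem_nhds hx)).differentiableAt (by simp)
  have key : ∀ v w : Fin n → ℝ, fderiv ℝ (fun y => fderiv ℝ f y w) x v
      = fderiv ℝ (fderiv ℝ f) x v w := by
    intro v w
    rw [fderiv_clm_apply hdf (differentiableAt_const w)]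
    simp
  show fderiv ℝ (fun y => fderiv ℝ f y (Pi.single j 1)) x (Pi.single i 1) = _
  rw [key, h2.eq]
  exact (key _ _).symm

end Helpers

/-- Pure algebra: triple-sum identity for a symmetric-style array. -/
lemma triple_sum {n : ℕ} (h : Fin n → Fin n → ℝ) :
    ∑ i, ∑ l, (h l i * ∑ m, h i m * h m l + h i l * ∑ m, h l m * h m i)
      = 2 * ∑ i, ∑ j, (∑ m, h i m * h m j) * h j i := by
  have e1 : ∀ a b c : Fin n, True := fun _ _ _ => trivial
  have L : ∑ i, ∑ l, (h l i * ∑ m, h i m * h m l + h i l * ∑ m, h l m * h m i)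
      = (∑ i, ∑ l, ∑ m, h l i * h i m * h m l) + ∑ i, ∑ l, ∑ m, h i l * h l m * h m i := by
    rw [← Finset.sum_add_distrib]
    refine Finset.sum_congr rfl fun i _ => ?_
    rw [← Finset.sum_add_distrib]
    refine Finset.sum_congr rfl fun l _ => ?_
    rw [Finset.mul_sum, Finset.mul_sum]
    congr 1 <;> exact Finset.sum_congr rfl fun m _ => by ring
  rw [L]
  have R : ∑ i, ∑ j, (∑ m, h i m * h m j) * h j i
      = ∑ i, ∑ j, ∑ m, h i m * h m j * h j i := by
    refine Finset.sum_congr rfl fun i _ => Finset.sum_congr rfl fun j _ => ?_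
    rw [Finset.sum_mul]
  rw [R]
  have T1 : ∑ i, ∑ l, ∑ m, h l i * h i m * h m l = ∑ i, ∑ l, ∑ m, h i l * h l m * h m i := by
    rw [Finset.sum_comm]
  have T2 : ∑ i, ∑ j, ∑ m, h i m * h m j * h j i = ∑ i, ∑ l, ∑ m, h i l * h l m * h m i := by
    refine Finset.sum_congr rfl fun i _ => ?_
    rw [Finset.sum_comm]
  rw [T1, T2]; ring

theorem stmt_2 {n : ℕ} (U : Set (Fin n → ℝ)) (hU : IsOpen U)
    (d : (Fin n → ℝ) → ℝ) (hd : ContDiffOn ℝ 4 d U)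
    (heik : ∀ x ∈ U, ∑ i, (pd i d x) ^ 2 = 1) :
    ∀ x ∈ U, normalDeriv d (normalDeriv d (lap d)) x
      = 2 * Matrix.trace (hess d x * hess d x * hess d x) := by
  have hd4 : ContDiffOn ℝ ((3:ℕ)+1) d U := by exact_mod_cast hd
  have c3 : ∀ j, ContDiffOn ℝ ((2:ℕ)+1) (pd j d) U := by
    intro j; have := pd_contDiffOn hU hd4 j; exact_mod_cast this
  have c2 : ∀ i j, ContDiffOn ℝ ((1:ℕ)+1) (pd i (pd j d)) U := by
    intro i j; have := pd_contDiffOn hU (c3 j) i; exact_mod_cast this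
  have c1 : ∀ k i j, ContDiffOn ℝ ((0:ℕ)+1) (pd k (pd i (pd j d))) U := by
    intro k i j; have := pd_contDiffOn hU (c2 i j) k; exact_mod_cast this
  have A1 : ∀ x ∈ U, ∀ i, DifferentiableAt ℝ (pd i d) x :=
    fun x hx i => pd_diffAt hU (c3 i) hx
  have A2 : ∀ x ∈ U, ∀ i j, DifferentiableAt ℝ (pd i (pd j d)) x :=
    fun x hx i j => pd_diffAt hU (c2 i j) hx
  have A3 : ∀ x ∈ U, ∀ k i j, DifferentiableAt ℝ (pd k (pd i (pd j d))) x :=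
    fun x hx k i j => pd_diffAt hU (c1 k i j) hx
  have S2 : ∀ x ∈ U, ∀ i j, pd i (pd j d) x = pd j (pd i d) x := by
    intro x hx i j
    exact pd_symm hU (hd.of_le (by norm_num)) hx i j
  have S3 : ∀ x ∈ U, ∀ k i j, pd k (pd i (pd j d)) x = pd i (pd k (pd j d)) x := by
    intro x hx k i j
    refine pd_symm hU ((c3 j).of_le ?_) hx k i
    exact_mod_cast by norm_num
  -- first differentiated eikonal identity
  have I1 : ∀ x ∈ U, ∀ j, ∑ i, pd i d x * pd j (pd i d) x = 0 := by
    intro x hx j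
    have h0 : pd j (fun y => ∑ i, pd i d y * pd i d y) x = 0 := by
      rw [pd_congr hU (g := fun _ => (1:ℝ)) (fun y hy => by
        simpa [pow_two] using heik y hy) hx j, pd_const]
    have h1 : pd j (fun y => ∑ i, pd i d y * pd i d y) x
        = ∑ i, (pd j (pd i d) x * pd i d x + pd i d x * pd j (pd i d) x) := by
      rw [pd_sum Finset.univ (fun i _ => (A1 x hx i).fun_mul (A1 x hx i)) j]
      exact Finset.sum_congr rfl fun i _ => pd_mul (A1 x hx i) (A1 x hx i) j
    rw [h1] at h0
    have h2 : ∑ i, (pd j (pd i d) x * pd i d x + pd i d x * pd j (pd i d) x)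
        = 2 * ∑ i, pd i d x * pd j (pd i d) x := by
      rw [Finset.mul_sum]
      exact Finset.sum_congr rfl fun i _ => by ring
    rw [h2] at h0
    linarith
  -- second differentiated eikonal identity
  have I2 : ∀ x ∈ U, ∀ j k, ∑ i, pd i d x * pd k (pd i (pd j d)) x
      = -∑ i, pd k (pd i d) x * pd i (pd j d) x := by
    intro x hx j k
    have φ0 : pd k (fun y => ∑ i, pd i d y * pd i (pd j d) y) x = 0 := by
      rw [pd_congr hU (g := fun _ => (0:ℝ)) (fun y hy => by
        have := I1 y hy j
        calc ∑ i, pd i d y * pd i (pd j d) y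
            = ∑ i, pd i d y * pd j (pd i d) y :=
              Finset.sum_congr rfl fun i _ => by rw [S2 y hy i j]
          _ = 0 := I1 y hy j) hx k, pd_const]
    have φ1 : pd k (fun y => ∑ i, pd i d y * pd i (pd j d) y) x
        = ∑ i, (pd k (pd i d) x * pd i (pd j d) x + pd i d x * pd k (pd i (pd j d)) x) := by
      rw [pd_sum Finset.univ (fun i _ => (A1 x hx i).fun_mul (A2 x hx i j)) k]
      exact Finset.sum_congr rfl fun i _ => pd_mul (A1 x hx i) (A2 x hx i j) k
    rw [φ1, Finset.sum_add_distrib] at φ0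
    linarith
  -- convenient form
  have I2' : ∀ x ∈ U, ∀ a b, ∑ k, pd k d x * pd k (pd a (pd b d)) x
      = -∑ l, pd a (pd l d) x * pd l (pd b d) x := by
    intro x hx a b
    have : ∑ k, pd k d x * pd k (pd a (pd b d)) x
        = ∑ k, pd k d x * pd a (pd k (pd b d)) x :=
      Finset.sum_congr rfl fun k _ => by rw [S3 x hx k a b]
    rw [this, I2 x hx b a]
  -- normal derivative of the Laplacian
  have I3 : ∀ x ∈ U, normalDeriv d (lap d) x
      = -∑ i, ∑ l, pd i (pd l d) x * pd l (pd i d) x := by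
    intro x hx
    show ∑ k, pd k d x * pd k (lap d) x = _
    have hl : ∀ k, pd k (lap d) x = ∑ j, pd k (pd j (pd j d)) x := by
      intro k
      unfold lap
      exact pd_sum Finset.univ (fun j _ => A2 x hx j j) k
    calc ∑ k, pd k d x * pd k (lap d) x
        = ∑ k, ∑ j, pd k d x * pd k (pd j (pd j d)) x := by
          exact Finset.sum_congr rfl fun k _ => by rw [hl k, Finset.mul_sum]
      _ = ∑ j, ∑ k, pd k d x * pd k (pd j (pd j d)) x := Finset.sum_comm
      _ = ∑ j, -∑ l, pd j (pd l d) x * pd l (pd j d) x :=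
          Finset.sum_congr rfl fun j _ => I2' x hx j j
      _ = -∑ j, ∑ l, pd j (pd l d) x * pd l (pd j d) x := by
          rw [← Finset.sum_neg_distrib]
  -- main computation
  intro x hx
  show ∑ k, pd k d x * pd k (normalDeriv d (lap d)) x = _
  have hψ : ∀ k, pd k (normalDeriv d (lap d)) x
      = -∑ i, ∑ l, (pd k (pd i (pd l d)) x * pd l (pd i d) x
          + pd i (pd l d) x * pd k (pd l (pd i d)) x) := by
    intro k
    rw [pd_congr hU (g := fun y => -∑ i, ∑ l, pd i (pd l d) y * pd l (pd i d) y)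
      (fun y hy => I3 y hy) hx k, pd_neg]
    congr 1
    rw [pd_sum Finset.univ (fun i _ =>
      DifferentiableAt.fun_sum (fun l _ => (A2 x hx i l).fun_mul (A2 x hx l i))) k]
    refine Finset.sum_congr rfl fun i _ => ?_
    rw [pd_sum Finset.univ (fun l _ => (A2 x hx i l).fun_mul (A2 x hx l i)) k]
    exact Finset.sum_congr rfl fun l _ => pd_mul (A2 x hx i l) (A2 x hx l i) k
  have main : ∑ k, pd k d x * pd k (normalDeriv d (lap d)) x
      = ∑ i, ∑ l, (pd l (pd i d) x * ∑ m, pd i (pd m d) x * pd m (pd l d) x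
          + pd i (pd l d) x * ∑ m, pd l (pd m d) x * pd m (pd i d) x) := by
    calc ∑ k, pd k d x * pd k (normalDeriv d (lap d)) x
        = ∑ k, -(∑ i, ∑ l, (pd k d x * (pd k (pd i (pd l d)) x * pd l (pd i d) x)
            + pd k d x * (pd i (pd l d) x * pd k (pd l (pd i d)) x))) := by
          refine Finset.sum_congr rfl fun k _ => ?_
          rw [hψ k, mul_neg, Finset.mul_sum]
          congr 1
          refine Finset.sum_congr rfl fun i _ => ?_
          rw [Finset.mul_sum]
          exact Finset.sum_congr rfl fun l _ => by ring
      _ = -∑ k, ∑ i, ∑ l, (pd k d x * (pd k (pd i (pd l d)) x * pd l (pd i d) x)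
            + pd k d x * (pd i (pd l d) x * pd k (pd l (pd i d)) x)) := by
          rw [← Finset.sum_neg_distrib]
      _ = -∑ i, ∑ l, ∑ k, (pd k d x * (pd k (pd i (pd l d)) x * pd l (pd i d) x)
            + pd k d x * (pd i (pd l d) x * pd k (pd l (pd i d)) x)) := by
          rw [Finset.sum_comm]
          congr 1
          exact Finset.sum_congr rfl fun i _ => Finset.sum_comm
      _ = -∑ i, ∑ l, ((∑ k, pd k d x * pd k (pd i (pd l d)) x) * pd l (pd i d) x
            + pd i (pd l d) x * ∑ k, pd k d x * pd k (pd l (pd i d)) x) := by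
          congr 1
          refine Finset.sum_congr rfl fun i _ => Finset.sum_congr rfl fun l _ => ?_
          rw [Finset.sum_add_distrib, Finset.sum_mul, Finset.mul_sum]
          congr 1 <;> exact Finset.sum_congr rfl fun k _ => by ring
      _ = -∑ i, ∑ l, ((-∑ m, pd i (pd m d) x * pd m (pd l d) x) * pd l (pd i d) x
            + pd i (pd l d) x * (-∑ m, pd l (pd m d) x * pd m (pd i d) x)) := by
          congr 1
          refine Finset.sum_congr rfl fun i _ => Finset.sum_congr rfl fun l _ => ?_
          rw [I2' x hx i l, I2' x hx l i]
      _ = ∑ i, ∑ l, (pd l (pd i d) x * ∑ m, pd i (pd m d) x * pd m (pd l d) x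
            + pd i (pd l d) x * ∑ m, pd l (pd m d) x * pd m (pd i d) x) := by
          rw [← Finset.sum_neg_distrib]
          refine Finset.sum_congr rfl fun i _ => ?_
          rw [← Finset.sum_neg_distrib]
          exact Finset.sum_congr rfl fun l _ => by ring
  rw [main]
  have htr : Matrix.trace (hess d x * hess d x * hess d x)
      = ∑ i, ∑ j, (∑ m, pd i (pd m d) x * pd m (pd j d) x) * pd j (pd i d) x := by
    simp only [Matrix.trace, Matrix.diag, Matrix.mul_apply, hess, Matrix.of_apply]
  rw [htr]
  exact triple_sum (fun a b => pd a (pd b d) x)
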